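/- For all real q > -1/4, the sequence F_{n+1}(q)/F_n(q) converges as n → ∞ to (1 + sqrt(1 + 4q))/2. -/

import Mathlib

noncomputable def qFibR (q : ℝ) : ℕ → ℝ
  | 0 => 1
  | 1 => 1
  | n + 2 => qFibR q (n + 1) + q * qFibR q n

theorem qFib_ratio_tendsto_golden (q : ℝ) (hq : -1/4 < q) :
    (∀ n, 0 < qFibR q n) ∧
      Filter.Tendsto (fun n => qFibR q (n + 1) / qFibR q n) Filter.atTop
        (nhds ((1 + Real.sqrt (1 + 4 * q)) / 2)) := by
  have hq4 : (0:ℝ) < 1 + 4 * q := by linarith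
  set s : ℝ := Real.sqrt (1 + 4 * q) with hs_def
  have hspos : 0 < s := Real.sqrt_pos.mpr hq4
  have hs2 : s ^ 2 = 1 + 4 * q := Real.sq_sqrt (le_of_lt hq4)
  set φ : ℝ := (1 + s) / 2 with hφ_def
  set ψ : ℝ := (1 - s) / 2 with hψ_def
  have hφpos : 0 < φ := by rw [hφ_def]; linarith
  have hφsq : φ ^ 2 = φ + q := by rw [hφ_def]; nlinarith [hs2]
  have hψsq : ψ ^ 2 = ψ + q := by rw [hψ_def]; nlinarith [hs2]
  have habs : |ψ| < φ := by
    rw [abs_lt]; constructor <;> [rw [hψ_def, hφ_def]; rw [hψ_def, hφ_def]] <;> linarith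
  -- Binet
  have binet : ∀ n, qFibR q n * s = φ ^ (n + 1) - ψ ^ (n + 1) := by
    intro n
    induction n using Nat.twoStepInduction with
    | zero => simp [qFibR, hφ_def, hψ_def]; ring
    | one =>
      simp only [qFibR, one_mul]
      have : φ ^ 2 - ψ ^ 2 = (φ + ψ) * (φ - ψ) := by ring
      rw [this]
      have h1 : φ + ψ = 1 := by rw [hφ_def, hψ_def]; ring
      have h2 : φ - ψ = s := by rw [hφ_def, hψ_def]; ring
      rw [h1, h2, one_mul]
    | more n ih1 ih2 =>
      show (qFibR q (n + 1) + q * qFibR q n) * s = _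
      have e1 : φ ^ (n + 2 + 1) = φ ^ (n + 1 + 1) + q * φ ^ (n + 1) := by
        have : φ ^ (n + 2 + 1) = φ ^ 2 * φ ^ (n + 1) := by ring
        rw [this, hφsq]; ring
      have e2 : ψ ^ (n + 2 + 1) = ψ ^ (n + 1 + 1) + q * ψ ^ (n + 1) := by
        have : ψ ^ (n + 2 + 1) = ψ ^ 2 * ψ ^ (n + 1) := by ring
        rw [this, hψsq]; ring
      rw [e1, e2]
      nlinarith [ih1, ih2]
  have hlt : ∀ n : ℕ, ψ ^ (n + 1) < φ ^ (n + 1) := by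
    intro n
    calc ψ ^ (n + 1) ≤ |ψ ^ (n + 1)| := le_abs_self _
    _ = |ψ| ^ (n + 1) := abs_pow _ _
    _ < φ ^ (n + 1) := pow_lt_pow_left₀ habs (abs_nonneg _) (Nat.succ_ne_zero n)
  have hpos : ∀ n, 0 < qFibR q n := by
    intro n
    have h := binet n
    have : 0 < qFibR q n * s := by rw [h]; linarith [hlt n]
    nlinarith [this, hspos]
  refine ⟨hpos, ?_⟩
  set r : ℝ := ψ / φ with hr_def
  have habs_r : |r| < 1 := by
    rw [hr_def, abs_div, abs_of_pos hφpos]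
    exact (div_lt_one hφpos).mpr habs
  have hrne : ∀ n : ℕ, 1 - r ^ (n + 1) ≠ 0 := by
    intro n
    have : |r ^ (n + 1)| < 1 := by
      rw [abs_pow]; exact pow_lt_one₀ (abs_nonneg _) habs_r (Nat.succ_ne_zero n)
    have := abs_lt.mp this
    linarith [this.2]
  have key : ∀ n : ℕ, qFibR q (n + 1) / qFibR q n
      = (φ - ψ * r ^ (n + 1)) / (1 - r ^ (n + 1)) := by
    intro n
    have hφn : φ ^ (n + 1) ≠ 0 := pow_ne_zero _ (ne_of_gt hφpos)
    have hden : qFibR q n ≠ 0 := ne_of_gt (hpos n)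
    have h1 := binet n
    have h2 := binet (n + 1)
    have hq1 : qFibR q (n + 1) = (φ ^ (n + 1 + 1) - ψ ^ (n + 1 + 1)) / s := by
      field_simp at h2 ⊢; linarith [h2]
    have hq0 : qFibR q n = (φ ^ (n + 1) - ψ ^ (n + 1)) / s := by
      field_simp at h1 ⊢; linarith [h1]
    have hsne : s ≠ 0 := ne_of_gt hspos
    have hφne : φ ≠ 0 := ne_of_gt hφpos
    rw [div_eq_div_iff hden (hrne n), hq1, hq0, hr_def]
    clear_value r φ ψ s
    rw [div_pow]
    field_simp
    ring
  have hr0 : Filter.Tendsto (fun n : ℕ => r ^ (n + 1)) Filter.atTop (nhds 0) := by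
    have := tendsto_pow_atTop_nhds_zero_of_abs_lt_one habs_r
    exact this.comp (Filter.tendsto_add_atTop_nat 1)
  have hnum : Filter.Tendsto (fun n : ℕ => φ - ψ * r ^ (n + 1)) Filter.atTop (nhds φ) := by
    have : Filter.Tendsto (fun n : ℕ => ψ * r ^ (n + 1)) Filter.atTop (nhds 0) := by
      simpa using hr0.const_mul ψ
    simpa using tendsto_const_nhds.sub this
  have hden : Filter.Tendsto (fun n : ℕ => 1 - r ^ (n + 1)) Filter.atTop (nhds 1) := by
    simpa using tendsto_const_nhds.sub hr0
  have := hnum.div hden one_ne_zero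
  simp only [div_one] at this
  exact (Filter.tendsto_congr key).mpr this
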